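/- For a partition λ = (λ_1,...,λ_n) of length at most n, the even orthogonal character satisfies oe_{(λ_1+1/2,...,λ_n+1/2)}(x_1,...,x_n) = (-1)^{∑λ_i} ∏_{i=1}^n (x_i^{1/2} + x̄_i^{1/2}) · oo_λ(-x_1,...,-x_n), where oo is the odd orthogonal character. -/

import Mathlib

open Matrix Finset

section Aux
variable {F : Type*} [Field F]

private lemma aux_entry (I : F) (hI : I ^ 2 = -1) (u : F) (m : ℕ) :
    (I * u) ^ (2 * m + 1) - ((I * u)⁻¹) ^ (2 * m + 1)
      = ((-1 : F) ^ m * I) * (u ^ (2 * m + 1) + (u⁻¹) ^ (2 * m + 1)) := by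
  have hinv : I⁻¹ = -I := inv_eq_of_mul_eq_one_right (by linear_combination -hI)
  have hpow : I ^ (2 * m + 1) = (-1 : F) ^ m * I := by
    rw [pow_succ, pow_mul, hI]
  have hneg : (-I) ^ (2 * m + 1) = -((-1 : F) ^ m * I) := by
    rw [neg_pow, hpow, pow_succ, pow_mul, neg_one_sq, one_pow]; ring
  rw [mul_inv, hinv, mul_pow, mul_pow, hpow, hneg]
  ring

private lemma step_alg (u : F) (hu : u ≠ 0) (k : ℕ) :
    (u + u⁻¹) * (u ^ (2 * (k + 1)) + (u⁻¹) ^ (2 * (k + 1)))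
      = (u ^ (2 * (k + 1) + 1) + (u⁻¹) ^ (2 * (k + 1) + 1))
        + (u ^ (2 * k + 1) + (u⁻¹) ^ (2 * k + 1)) := by
  linear_combination (u ^ (2 * k + 1) + (u⁻¹) ^ (2 * k + 1)) * mul_inv_cancel₀ hu

private lemma det_shift (n : ℕ) (hn : 1 ≤ n) (u : Fin n → F) (hu0 : ∀ i, u i ≠ 0) :
    (∏ i, (u i + (u i)⁻¹)) *
      Matrix.det (Matrix.of fun i j : Fin n =>
        (u i) ^ (2 * (n - 1 - (j : ℕ))) + ((u i)⁻¹) ^ (2 * (n - 1 - (j : ℕ))))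
    = 2 * Matrix.det (Matrix.of fun i j : Fin n =>
        (u i) ^ (2 * (n - 1 - (j : ℕ)) + 1) + ((u i)⁻¹) ^ (2 * (n - 1 - (j : ℕ)) + 1)) := by
  set B' : Matrix (Fin n) (Fin n) F := Matrix.of fun i l =>
    (u i) ^ (2 * (n - 1 - (l : ℕ)) + 1) + ((u i)⁻¹) ^ (2 * (n - 1 - (l : ℕ)) + 1) with hB'
  set T : Matrix (Fin n) (Fin n) F := Matrix.of fun l j =>
    if l = j then (if (j : ℕ) = n - 1 then 2 else 1)
    else if (l : ℕ) = (j : ℕ) + 1 then 1 else 0 with hTdef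
  have hTtri : T.BlockTriangular OrderDual.toDual := by
    intro l j h
    have h' : (l : ℕ) < (j : ℕ) := h
    have h1 : l ≠ j := by intro e; subst e; exact absurd h' (lt_irrefl _)
    have h2 : ¬ (l : ℕ) = (j : ℕ) + 1 := by omega
    simp [hTdef, h1, h2]
  have hTdet : T.det = 2 := by
    rw [Matrix.det_of_lowerTriangular T hTtri]
    have : ∀ j : Fin n, T j j = if (j : ℕ) = n - 1 then (2 : F) else 1 := by
      intro j; simp [hTdef]
    rw [Finset.prod_congr rfl fun j _ => this j]
    rw [Finset.prod_eq_single (⟨n - 1, by omega⟩ : Fin n)]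
    · simp
    · intro b _ hb
      rw [if_neg]
      intro hc
      exact hb (Fin.ext (by simpa using hc))
    · simp
  have key : ∀ i j, (B' * T) i j
      = (u i + (u i)⁻¹) * ((u i) ^ (2 * (n - 1 - (j : ℕ))) + ((u i)⁻¹) ^ (2 * (n - 1 - (j : ℕ)))) := by
    intro i j
    rw [Matrix.mul_apply]
    have hsplit : ∀ l : Fin n, B' i l * T l j
        = (if l = j then B' i j * (if (j : ℕ) = n - 1 then 2 else 1) else 0)
          + (if (l : ℕ) = (j : ℕ) + 1 then B' i l else 0) := by
      intro l
      by_cases h1 : l = j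
      · subst h1
        have h2 : ¬ (l : ℕ) = (l : ℕ) + 1 := by omega
        simp [hTdef, h2]
      · have h1' : (l : ℕ) ≠ (j : ℕ) := fun hc => h1 (Fin.ext hc)
        simp only [hTdef, of_apply, if_neg h1]
        split_ifs <;> ring
    rw [Finset.sum_congr rfl (fun l _ => hsplit l), Finset.sum_add_distrib,
      Finset.sum_ite_eq' Finset.univ j]
    simp only [Finset.mem_univ, if_true]
    by_cases hj : (j : ℕ) + 1 < n
    · have hsum2 : (∑ l : Fin n, if (l : ℕ) = (j : ℕ) + 1 then B' i l else 0)
          = B' i ⟨(j : ℕ) + 1, hj⟩ := by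
        rw [Finset.sum_eq_single (⟨(j : ℕ) + 1, hj⟩ : Fin n)]
        · simp
        · intro b _ hb
          rw [if_neg]
          intro hc
          exact hb (Fin.ext (by simpa using hc))
        · simp
      have hjne : ¬ (j : ℕ) = n - 1 := by omega
      rw [hsum2, if_neg hjne, mul_one]
      have hk : n - 1 - (j : ℕ) = (n - 2 - (j : ℕ)) + 1 := by omega
      have hk2 : n - 1 - ((j : ℕ) + 1) = n - 2 - (j : ℕ) := by omega
      simp only [hB', of_apply]
      rw [hk, hk2]
      exact (step_alg (u i) (hu0 i) (n - 2 - (j : ℕ))).symm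
    · have hsum2 : (∑ l : Fin n, if (l : ℕ) = (j : ℕ) + 1 then B' i l else 0) = 0 := by
        apply Finset.sum_eq_zero
        intro b _
        rw [if_neg]
        have := b.isLt
        omega
      have hjeq : (j : ℕ) = n - 1 := by have := j.isLt; omega
      have h0 : n - 1 - (j : ℕ) = 0 := by omega
      rw [hsum2, if_pos hjeq, add_zero]
      simp only [hB', of_apply, h0]
      ring
  calc (∏ i, (u i + (u i)⁻¹)) *
      Matrix.det (Matrix.of fun i j : Fin n =>
        (u i) ^ (2 * (n - 1 - (j : ℕ))) + ((u i)⁻¹) ^ (2 * (n - 1 - (j : ℕ))))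
      = Matrix.det (Matrix.of fun i j : Fin n => (u i + (u i)⁻¹) *
          ((u i) ^ (2 * (n - 1 - (j : ℕ))) + ((u i)⁻¹) ^ (2 * (n - 1 - (j : ℕ))))) := by
        exact (Matrix.det_mul_column (fun i => u i + (u i)⁻¹) (Matrix.of fun i j : Fin n =>
          (u i) ^ (2 * (n - 1 - (j : ℕ))) + ((u i)⁻¹) ^ (2 * (n - 1 - (j : ℕ))))).symm
    _ = (B' * T).det := by
        congr 1
        ext i j
        rw [key i j]
        rfl
    _ = B'.det * T.det := Matrix.det_mul _ _
    _ = 2 * B'.det := by rw [hTdet, mul_comm]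
end Aux


/-- `oe_{(λ_1+1/2,…,λ_n+1/2)}(x) = (-1)^{Σλ_i} ∏(x_i^{1/2}+x̄_i^{1/2}) ·
oo_λ(-x)`.  Half-integer powers are interpreted via chosen square roots `u i` of `x i`
(so `x_i^{m+1/2} = u_i^{2m+1}`), and the square roots of `-x_i` are `I · u_i` where
`I² = -1`.  Both characters are written via the Weyl determinant formulas; the
determinants in the denominators are assumed nonzero. -/
theorem oe_halfShift_eq_oo_neg {F : Type*} [Field F] (n : ℕ) (hn : 1 ≤ n)
    (lam : Fin n → ℕ) (hlam : Antitone lam)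
    (x u : Fin n → F) (hu : ∀ i, u i ^ 2 = x i) (hx : ∀ i, x i ≠ 0)
    (I : F) (hI : I ^ 2 = -1)
    (hden1 : Matrix.det (Matrix.of fun i j : Fin n =>
        x i ^ (n - 1 - (j : ℕ)) + (x i)⁻¹ ^ (n - 1 - (j : ℕ))) ≠ 0)
    (hden2 : Matrix.det (Matrix.of fun i j : Fin n =>
        (I * u i) ^ (2 * (n - 1 - (j : ℕ)) + 1) -
          ((I * u i)⁻¹) ^ (2 * (n - 1 - (j : ℕ)) + 1)) ≠ 0) :
    2 * Matrix.det (Matrix.of fun i j : Fin n =>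
        u i ^ (2 * (lam j + (n - 1 - (j : ℕ))) + 1) +
          ((u i)⁻¹) ^ (2 * (lam j + (n - 1 - (j : ℕ))) + 1)) /
      Matrix.det (Matrix.of fun i j : Fin n =>
        x i ^ (n - 1 - (j : ℕ)) + (x i)⁻¹ ^ (n - 1 - (j : ℕ))) =
    (-1 : F) ^ (∑ i, lam i) * (∏ i, (u i + (u i)⁻¹)) *
      (Matrix.det (Matrix.of fun i j : Fin n =>
          (I * u i) ^ (2 * (lam j + (n - 1 - (j : ℕ))) + 1) -
            ((I * u i)⁻¹) ^ (2 * (lam j + (n - 1 - (j : ℕ))) + 1)) /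
        Matrix.det (Matrix.of fun i j : Fin n =>
          (I * u i) ^ (2 * (n - 1 - (j : ℕ)) + 1) -
            ((I * u i)⁻¹) ^ (2 * (n - 1 - (j : ℕ)) + 1))) := by
  have hu0 : ∀ i, u i ≠ 0 := fun i h => hx i (by rw [← hu i, h]; ring)
  have hI0 : I ≠ 0 := by intro h; rw [h] at hI; norm_num at hI
  set L : ℕ := ∑ i, lam i with hL
  set S : ℕ := ∑ j : Fin n, (n - 1 - (j : ℕ)) with hS
  -- the `x`-matrix equals the `u`-matrix
  have hBx : (Matrix.of fun i j : Fin n =>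
      x i ^ (n - 1 - (j : ℕ)) + (x i)⁻¹ ^ (n - 1 - (j : ℕ)))
      = Matrix.of fun i j : Fin n =>
        (u i) ^ (2 * (n - 1 - (j : ℕ))) + ((u i)⁻¹) ^ (2 * (n - 1 - (j : ℕ))) := by
    ext i j
    simp only [Matrix.of_apply]
    rw [← hu i, ← pow_mul, ← inv_pow, ← pow_mul]
  -- numerator transformation
  have hN : Matrix.det (Matrix.of fun i j : Fin n =>
        (I * u i) ^ (2 * (lam j + (n - 1 - (j : ℕ))) + 1) -
          ((I * u i)⁻¹) ^ (2 * (lam j + (n - 1 - (j : ℕ))) + 1))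
      = ((-1 : F) ^ (L + S) * I ^ n) * Matrix.det (Matrix.of fun i j : Fin n =>
          u i ^ (2 * (lam j + (n - 1 - (j : ℕ))) + 1) +
            ((u i)⁻¹) ^ (2 * (lam j + (n - 1 - (j : ℕ))) + 1)) := by
    have he : (Matrix.of fun i j : Fin n =>
        (I * u i) ^ (2 * (lam j + (n - 1 - (j : ℕ))) + 1) -
          ((I * u i)⁻¹) ^ (2 * (lam j + (n - 1 - (j : ℕ))) + 1))
        = Matrix.of fun i j : Fin n =>
          ((-1 : F) ^ (lam j + (n - 1 - (j : ℕ))) * I) *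
            (u i ^ (2 * (lam j + (n - 1 - (j : ℕ))) + 1) +
              ((u i)⁻¹) ^ (2 * (lam j + (n - 1 - (j : ℕ))) + 1)) := by
      ext i j
      exact aux_entry I hI (u i) _
    rw [he]
    refine (Matrix.det_mul_row (fun j : Fin n => (-1 : F) ^ (lam j + (n - 1 - (j : ℕ))) * I)
      (Matrix.of fun i j : Fin n => u i ^ (2 * (lam j + (n - 1 - (j : ℕ))) + 1) +
        ((u i)⁻¹) ^ (2 * (lam j + (n - 1 - (j : ℕ))) + 1))).trans ?_
    congr 1
    rw [Finset.prod_mul_distrib, Finset.prod_const, Finset.card_univ, Fintype.card_fin,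
      Finset.prod_pow_eq_pow_sum, Finset.sum_add_distrib]
  have hD : Matrix.det (Matrix.of fun i j : Fin n =>
        (I * u i) ^ (2 * (n - 1 - (j : ℕ)) + 1) -
          ((I * u i)⁻¹) ^ (2 * (n - 1 - (j : ℕ)) + 1))
      = ((-1 : F) ^ S * I ^ n) * Matrix.det (Matrix.of fun i j : Fin n =>
          u i ^ (2 * (n - 1 - (j : ℕ)) + 1) +
            ((u i)⁻¹) ^ (2 * (n - 1 - (j : ℕ)) + 1)) := by
    have he : (Matrix.of fun i j : Fin n =>
        (I * u i) ^ (2 * (n - 1 - (j : ℕ)) + 1) -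
          ((I * u i)⁻¹) ^ (2 * (n - 1 - (j : ℕ)) + 1))
        = Matrix.of fun i j : Fin n =>
          ((-1 : F) ^ (n - 1 - (j : ℕ)) * I) *
            (u i ^ (2 * (n - 1 - (j : ℕ)) + 1) +
              ((u i)⁻¹) ^ (2 * (n - 1 - (j : ℕ)) + 1)) := by
      ext i j
      exact aux_entry I hI (u i) _
    rw [he]
    refine (Matrix.det_mul_row (fun j : Fin n => (-1 : F) ^ (n - 1 - (j : ℕ)) * I)
      (Matrix.of fun i j : Fin n => u i ^ (2 * (n - 1 - (j : ℕ)) + 1) +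
        ((u i)⁻¹) ^ (2 * (n - 1 - (j : ℕ)) + 1))).trans ?_
    congr 1
    rw [Finset.prod_mul_distrib, Finset.prod_const, Finset.card_univ, Fintype.card_fin,
      Finset.prod_pow_eq_pow_sum]
  set a := Matrix.det (Matrix.of fun i j : Fin n =>
      u i ^ (2 * (lam j + (n - 1 - (j : ℕ))) + 1) +
        ((u i)⁻¹) ^ (2 * (lam j + (n - 1 - (j : ℕ))) + 1)) with ha
  set b' := Matrix.det (Matrix.of fun i j : Fin n =>
      u i ^ (2 * (n - 1 - (j : ℕ)) + 1) +
        ((u i)⁻¹) ^ (2 * (n - 1 - (j : ℕ)) + 1)) with hb'def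
  set bu := Matrix.det (Matrix.of fun i j : Fin n =>
      (u i) ^ (2 * (n - 1 - (j : ℕ))) + ((u i)⁻¹) ^ (2 * (n - 1 - (j : ℕ)))) with hbu
  set P := ∏ i, (u i + (u i)⁻¹) with hP
  have hbu0 : bu ≠ 0 := by rw [← hBx] at hbu; rw [hbu]; exact hden1
  have hb'0 : b' ≠ 0 := by
    intro h
    apply hden2
    rw [hD, h, mul_zero]
  have hshift : P * bu = 2 * b' := det_shift n hn u hu0
  have h2 : (2 : F) ≠ 0 := by
    intro h2
    apply hden1
    apply Matrix.det_eq_zero_of_column_eq_zero (⟨n - 1, by omega⟩ : Fin n)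
    intro i
    have h0 : n - 1 - ((⟨n - 1, by omega⟩ : Fin n) : ℕ) = 0 := by simp
    simp only [Matrix.of_apply, h0, pow_zero]
    rw [← h2]; norm_num
  have hP0 : P ≠ 0 := by
    intro h
    rw [h, zero_mul] at hshift
    rcases mul_eq_zero.mp hshift.symm with h' | h'
    · exact h2 h'
    · exact hb'0 h'
  rw [hBx, ← hbu, hN, hD]
  have hIn : I ^ n ≠ 0 := pow_ne_zero _ hI0
  have hfrac : ((-1 : F) ^ (L + S) * I ^ n) * a / (((-1 : F) ^ S * I ^ n) * b')
      = (-1 : F) ^ L * (a / b') := by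
    rw [pow_add]
    field_simp
  rw [hfrac]
  have hLL : (-1 : F) ^ L * (-1 : F) ^ L = 1 := by
    rw [← pow_add, ← two_mul, pow_mul, neg_one_sq, one_pow]
  have hRHS : (-1 : F) ^ L * P * ((-1 : F) ^ L * (a / b')) = P * a / b' := by
    calc (-1 : F) ^ L * P * ((-1 : F) ^ L * (a / b'))
        = ((-1 : F) ^ L * (-1 : F) ^ L) * (P * (a / b')) := by ring
      _ = P * a / b' := by rw [hLL, one_mul, mul_div_assoc]
  rw [hRHS, div_eq_div_iff hbu0 hb'0]
  linear_combination (-a) * hshift
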